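/- Let α,β,γ,δ be complex numbers for which both sides below are defined, and let a, b be coprime positive integers. Then a^β b^δ η_{α,β,γ,δ,a,b}(0,0,β+δ) = B_{α,−δ,γ,−β,a} · B_{γ,−β,α,−δ,b}. -/

import Mathlib

/-- The shifted divisor function `σ_{α,β}(n) = ∑_{n₁n₂=n} n₁^{−α} n₂^{−β}`. -/
noncomputable def sigmaC (α β : ℂ) (n : ℕ) : ℂ :=
  ∑ d ∈ n.divisors, (d : ℂ) ^ (-α) * ((n / d : ℕ) : ℂ) ^ (-β)

/-- The finite Euler product `B_{α,β,γ,δ,a}`, the product running over the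
prime powers `p^ν ‖ a`. -/
noncomputable def Bfactor (α β γ δ : ℂ) (a : ℕ) : ℂ :=
  ∏ p ∈ a.primeFactors,
    (∑' j : ℕ, sigmaC α β (p ^ j) * sigmaC γ δ (p ^ (j + a.factorization p)) *
        (p : ℂ) ^ (-(j : ℂ))) /
    (∑' j : ℕ, sigmaC α β (p ^ j) * sigmaC γ δ (p ^ j) * (p : ℂ) ^ (-(j : ℂ)))

/-- The local factor `c_p(x,y,z) = (1−p^{−1−x})(1−p^{−1−y})(1−p^{−2−z})^{−1}`. -/
noncomputable def cP (p : ℕ) (x y z : ℂ) : ℂ :=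
  (1 - (p : ℂ) ^ (-1 - x)) * (1 - (p : ℂ) ^ (-1 - y)) * (1 - (p : ℂ) ^ (-2 - z))⁻¹

/-- The finite Euler product `η_{α,β,γ,δ,a}(u,v,s)`. -/
noncomputable def etaA (α β γ δ : ℂ) (a : ℕ) (u v s : ℂ) : ℂ :=
  ∑ l ∈ a.divisors, (l : ℂ) ^ (-γ + δ - 2 * v - s) *
    ∏ p ∈ (a / l).primeFactors,
      cP p (α - β + γ - δ + 2 * u + 2 * v + s) (γ - δ + 2 * v) (α - β + γ - δ + 2 * u + 2 * v)

/-- `η_{α,β,γ,δ,a,b}(u,v,s) = η_{α,β,γ,δ,a}(u,v,s) η_{γ,δ,α,β,b}(u,v,s)`. -/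
noncomputable def etaAB (α β γ δ : ℂ) (a b : ℕ) (u v s : ℂ) : ℂ :=
  etaA α β γ δ a u v s * etaA γ δ α β b u v s


open Finset Complex

noncomputable def geoS (U W : ℂ) (j : ℕ) : ℂ := ∑ i ∈ Finset.range (j+1), U ^ i * W ^ (j - i)

lemma geoS_zero (U W : ℂ) : geoS U W 0 = 1 := by simp [geoS]

lemma geoS_succ (U W : ℂ) (j : ℕ) : geoS U W (j+1) = U * geoS U W j + W ^ (j+1) := by
  rw [geoS, Finset.sum_range_succ']
  simp only [Nat.add_sub_add_right, pow_succ, Nat.sub_zero, pow_zero, one_mul]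
  rw [geoS, Finset.mul_sum]
  congr 1
  exact Finset.sum_congr rfl fun i hi => by ring

lemma geoS_comm (U W : ℂ) (j : ℕ) : geoS U W j = geoS W U j := by
  rw [geoS, ← Finset.sum_range_reflect]
  refine Finset.sum_congr rfl fun i hi => ?_
  have hij : i ≤ j := by simp at hi; omega
  rw [Nat.add_sub_cancel, Nat.sub_sub_self hij, mul_comm]

lemma geoS_succ' (U W : ℂ) (j : ℕ) : geoS U W (j+1) = W * geoS U W j + U ^ (j+1) := by
  rw [geoS_comm, geoS_succ, geoS_comm]

lemma norm_geoS_le {U W : ℂ} {M : ℝ} (hU : ‖U‖ ≤ M) (hW : ‖W‖ ≤ M) (j : ℕ) :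
    ‖geoS U W j‖ ≤ (j+1) * M ^ j := by
  have hM0 : 0 ≤ M := le_trans (norm_nonneg _) hU
  calc ‖geoS U W j‖ ≤ ∑ i ∈ Finset.range (j+1), ‖U ^ i * W ^ (j-i)‖ := norm_sum_le _ _
    _ ≤ ∑ i ∈ Finset.range (j+1), M ^ j := by
        refine Finset.sum_le_sum fun i hi => ?_
        have hij : i ≤ j := by simp at hi; omega
        rw [norm_mul, norm_pow, norm_pow]
        calc ‖U‖^i * ‖W‖^(j-i) ≤ M^i * M^(j-i) := by
              exact mul_le_mul (pow_le_pow_left₀ (norm_nonneg _) hU i)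
                (pow_le_pow_left₀ (norm_nonneg _) hW (j-i)) (by positivity) (by positivity)
          _ = M ^ j := by rw [← pow_add, Nat.add_sub_cancel' hij]
    _ = (j+1) * M ^ j := by rw [Finset.sum_const, Finset.card_range]; push_cast; ring

lemma geoS_mul_pow (U W x : ℂ) (n : ℕ) :
    geoS U W n * x ^ n = ∑ k ∈ Finset.range (n+1), (U*x)^k * ((W*x)^(n-k)) := by
  rw [geoS, Finset.sum_mul]
  refine Finset.sum_congr rfl fun k hk => ?_
  have hk' : k ≤ n := by simp at hk; omega
  have : x ^ n = x ^ k * x ^ (n - k) := by rw [← pow_add, Nat.add_sub_cancel' hk']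
  rw [this, mul_pow, mul_pow]; ring

lemma summable_geoS_mul {U W x : ℂ} (hU : ‖U*x‖ < 1) (hW : ‖W*x‖ < 1) :
    Summable (fun n : ℕ => geoS U W n * x ^ n) := by
  have h1 : Summable fun n : ℕ => ‖(U*x)^n‖ := by
    simpa [norm_pow] using summable_geometric_of_lt_one (norm_nonneg (U*x)) hU
  have h2 : Summable fun n : ℕ => ‖(W*x)^n‖ := by
    simpa [norm_pow] using summable_geometric_of_lt_one (norm_nonneg (W*x)) hW
  have := (summable_norm_sum_mul_range_of_summable_norm h1 h2).of_norm
  exact this.congr fun n => (geoS_mul_pow U W x n).symm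

lemma tsum_geoS_mul {U W x : ℂ} (hU : ‖U*x‖ < 1) (hW : ‖W*x‖ < 1) :
    ∑' n : ℕ, geoS U W n * x ^ n = ((1 - U*x) * (1 - W*x))⁻¹ := by
  have h1 : Summable fun n : ℕ => ‖(U*x)^n‖ := by
    simpa [norm_pow] using summable_geometric_of_lt_one (norm_nonneg (U*x)) hU
  have h2 : Summable fun n : ℕ => ‖(W*x)^n‖ := by
    simpa [norm_pow] using summable_geometric_of_lt_one (norm_nonneg (W*x)) hW
  have key := tsum_mul_tsum_eq_tsum_sum_range_of_summable_norm h1 h2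
  rw [tsum_geometric_of_norm_lt_one hU, tsum_geometric_of_norm_lt_one hW] at key
  rw [mul_inv]
  rw [key]
  exact (tsum_congr fun n => geoS_mul_pow U W x n)

noncomputable def Sgen (U W Y Z q : ℂ) (ν : ℕ) : ℂ :=
  ∑' j : ℕ, geoS U W j * geoS Y Z (j+ν) * q ^ j

lemma summable_poly_geo {r : ℝ} (h0 : 0 ≤ r) (h1 : r < 1) (c d : ℝ) :
    Summable (fun j : ℕ => ((j:ℝ)+c)*((j:ℝ)+d)*r^j) := by
  have hr : ‖r‖ < 1 := by rwa [Real.norm_eq_abs, _root_.abs_of_nonneg h0]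
  have h2 := summable_pow_mul_geometric_of_norm_lt_one (R := ℝ) 2 hr
  have h1' := summable_pow_mul_geometric_of_norm_lt_one (R := ℝ) 1 hr
  have h0' := summable_geometric_of_lt_one h0 h1
  have := (h2.add (h1'.mul_left (c+d))).add (h0'.mul_left (c*d))
  exact this.congr fun j => by push_cast; ring

section
variable {U W Y Z q : ℂ} {M : ℝ}

lemma pair_bound (hq : M^2 * ‖q‖ < 1) {A B : ℂ} (hA : ‖A‖ ≤ M) (hB : ‖B‖ ≤ M) :
    ‖A*(B*q)‖ < 1 := by
  have hM0 : 0 ≤ M := le_trans (norm_nonneg A) hA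
  calc ‖A*(B*q)‖ = ‖A‖*(‖B‖*‖q‖) := by rw [norm_mul, norm_mul]
    _ ≤ M*(M*‖q‖) := by
        have h1 : ‖B‖*‖q‖ ≤ M*‖q‖ := mul_le_mul_of_nonneg_right hB (norm_nonneg q)
        exact mul_le_mul hA h1 (by positivity) hM0
    _ = M^2*‖q‖ := by ring
    _ < 1 := hq

lemma summable_Sgen (hU : ‖U‖ ≤ M) (hW : ‖W‖ ≤ M) (hY : ‖Y‖ ≤ M) (hZ : ‖Z‖ ≤ M)
    (hq : M^2 * ‖q‖ < 1) (ν : ℕ) :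
    Summable (fun j : ℕ => geoS U W j * geoS Y Z (j+ν) * q ^ j) := by
  have hM0 : 0 ≤ M := le_trans (norm_nonneg U) hU
  have hr0 : 0 ≤ M^2*‖q‖ := by positivity
  apply Summable.of_norm_bounded
    (g := fun j : ℕ => M^ν * (((j:ℝ)+1)*((j:ℝ)+((ν:ℝ)+1))*(M^2*‖q‖)^j))
  · exact (summable_poly_geo hr0 hq 1 ((ν:ℝ)+1)).mul_left _
  · intro j
    have b1 := norm_geoS_le hU hW j
    have b2 := norm_geoS_le hY hZ (j+ν)
    calc ‖geoS U W j * geoS Y Z (j+ν) * q^j‖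
        = ‖geoS U W j‖ * ‖geoS Y Z (j+ν)‖ * ‖q‖^j := by rw [norm_mul, norm_mul, norm_pow]
      _ ≤ (((j:ℝ)+1) * M^j) * (((j:ℝ)+(ν:ℝ)+1) * M^(j+ν)) * ‖q‖^j := by
          have b2' : ‖geoS Y Z (j+ν)‖ ≤ ((j:ℝ)+(ν:ℝ)+1) * M^(j+ν) := by
            refine le_trans b2 (le_of_eq ?_)
            push_cast
            ring
          refine mul_le_mul (mul_le_mul b1 b2' (norm_nonneg _) (by positivity)) le_rfl
            (by positivity) (by positivity)
      _ = M^ν * (((j:ℝ)+1)*((j:ℝ)+((ν:ℝ)+1))*(M^2*‖q‖)^j) := by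
          rw [pow_add]; ring

lemma Sgen_succ (hU : ‖U‖ ≤ M) (hW : ‖W‖ ≤ M) (hY : ‖Y‖ ≤ M) (hZ : ‖Z‖ ≤ M)
    (hq : M^2 * ‖q‖ < 1) (ν : ℕ) :
    Sgen U W Y Z q (ν+1) = Y * Sgen U W Y Z q ν
      + Z^(ν+1) * ((1 - U*(Z*q)) * (1 - W*(Z*q)))⁻¹ := by
  have hUZ := pair_bound hq hU hZ
  have hWZ := pair_bound hq hW hZ
  have hs1 : Summable (fun j : ℕ => Y * (geoS U W j * geoS Y Z (j+ν) * q^j)) :=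
    (summable_Sgen hU hW hY hZ hq ν).mul_left Y
  have hs2 : Summable (fun j : ℕ => Z^(ν+1) * (geoS U W j * (Z*q)^j)) :=
    (summable_geoS_mul hUZ hWZ).mul_left _
  have hpt : ∀ j : ℕ, geoS U W j * geoS Y Z (j+(ν+1)) * q^j
      = Y * (geoS U W j * geoS Y Z (j+ν) * q^j) + Z^(ν+1) * (geoS U W j * (Z*q)^j) := by
    intro j
    rw [show j + (ν+1) = (j+ν)+1 from rfl, geoS_succ, mul_pow]
    ring
  simp only [Sgen]
  rw [tsum_congr hpt, Summable.tsum_add hs1 hs2, tsum_mul_left, tsum_mul_left,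
    tsum_geoS_mul hUZ hWZ]

lemma Sgen_formula (hU : ‖U‖ ≤ M) (hW : ‖W‖ ≤ M) (hY : ‖Y‖ ≤ M) (hZ : ‖Z‖ ≤ M)
    (hq : M^2 * ‖q‖ < 1) (ν : ℕ) :
    Sgen U W Y Z q ν = Y^ν * Sgen U W Y Z q 0
      + ((1 - U*(Z*q)) * (1 - W*(Z*q)))⁻¹ * ∑ i ∈ Finset.range ν, Y^i * Z^(ν-i) := by
  induction ν with
  | zero => simp
  | succ n ih =>
    rw [Sgen_succ hU hW hY hZ hq n, ih, Finset.sum_range_succ']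
    have h1 : ∀ i ∈ Finset.range n, Y^(i+1) * Z^(n+1-(i+1)) = Y * (Y^i * Z^(n-i)) := by
      intro i _
      rw [Nat.add_sub_add_right]
      ring
    rw [Finset.sum_congr rfl h1, ← Finset.mul_sum]
    simp only [pow_zero, Nat.sub_zero, one_mul]
    ring

lemma one_sub_ne_zero_of_norm_lt_one {x : ℂ} (hx : ‖x‖ < 1) : (1 : ℂ) - x ≠ 0 := by
  intro h
  rw [sub_eq_zero] at h
  rw [← h] at hx
  simp at hx

lemma Sgen_zero_mul (hU : ‖U‖ ≤ M) (hW : ‖W‖ ≤ M) (hY : ‖Y‖ ≤ M) (hZ : ‖Z‖ ≤ M)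
    (hq : M^2 * ‖q‖ < 1) :
    Sgen U W Y Z q 0 * ((1 - U*(Y*q)) * (1 - U*(Z*q)) * (1 - W*(Y*q)) * (1 - W*(Z*q)))
      = 1 - U*W*Y*Z*q^2 := by
  set S := Sgen U W Y Z q 0 with hSdef
  have hf : Summable (fun j : ℕ => geoS U W j * geoS Y Z j * q^j) :=
    (summable_Sgen hU hW hY hZ hq 0).congr (fun j => by rw [add_zero])
  have hST : S = ∑' j : ℕ, geoS U W j * geoS Y Z j * q^j := by
    rw [hSdef, Sgen]
    exact tsum_congr fun j => by rw [add_zero]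
  have hgU : Summable (fun j : ℕ => geoS U W j * (Z*q)^j) :=
    summable_geoS_mul (pair_bound hq hU hZ) (pair_bound hq hW hZ)
  have hgY : Summable (fun j : ℕ => geoS Y Z j * (W*q)^j) :=
    summable_geoS_mul (pair_bound hq hY hW) (pair_bound hq hZ hW)
  have hgeo : Summable (fun j : ℕ => (W*(Z*q))^j) :=
    summable_geometric_of_norm_lt_one (pair_bound hq hW hZ)
  have hsplit : ∀ j : ℕ, geoS U W (j+1) * geoS Y Z (j+1) * q^(j+1)
      = (U*(Y*q)) * (geoS U W j * geoS Y Z j * q^j)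
        + ((U*(Z*q)) * (geoS U W j * (Z*q)^j)
        + ((W*(Y*q)) * (geoS Y Z j * (W*q)^j)
        + (W*(Z*q)) * (W*(Z*q))^j)) := by
    intro j
    rw [geoS_succ U W j, geoS_succ Y Z j, mul_pow, mul_pow]
    ring
  have key : S = 1 + ((U*(Y*q)) * S
      + ((U*(Z*q)) * (((1 - U*(Z*q)) * (1 - W*(Z*q)))⁻¹)
      + ((W*(Y*q)) * (((1 - Y*(W*q)) * (1 - Z*(W*q)))⁻¹)
      + (W*(Z*q)) * (1 - W*(Z*q))⁻¹))) := by
    have tail : (∑' j : ℕ, geoS U W (j+1) * geoS Y Z (j+1) * q^(j+1))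
        = ((U*(Y*q)) * S
        + ((U*(Z*q)) * (((1 - U*(Z*q)) * (1 - W*(Z*q)))⁻¹)
        + ((W*(Y*q)) * (((1 - Y*(W*q)) * (1 - Z*(W*q)))⁻¹)
        + (W*(Z*q)) * (1 - W*(Z*q))⁻¹))) := by
      rw [tsum_congr hsplit,
      Summable.tsum_add (hf.mul_left _) ((hgU.mul_left _).add ((hgY.mul_left _).add (hgeo.mul_left _))),
      Summable.tsum_add (hgU.mul_left _) ((hgY.mul_left _).add (hgeo.mul_left _)),
      Summable.tsum_add (hgY.mul_left _) (hgeo.mul_left _),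
      tsum_mul_left, tsum_mul_left, tsum_mul_left, tsum_mul_left,
      tsum_geoS_mul (pair_bound hq hU hZ) (pair_bound hq hW hZ),
      tsum_geoS_mul (pair_bound hq hY hW) (pair_bound hq hZ hW),
      tsum_geometric_of_norm_lt_one (pair_bound hq hW hZ), ← hST]
    conv_lhs => rw [hST, hf.tsum_eq_zero_add]
    rw [show geoS U W 0 * geoS Y Z 0 * q ^ 0 = (1:ℂ) by simp [geoS_zero], tail]
  have nUZ := one_sub_ne_zero_of_norm_lt_one (pair_bound hq hU hZ)
  have nWZ := one_sub_ne_zero_of_norm_lt_one (pair_bound hq hW hZ)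
  have nYW := one_sub_ne_zero_of_norm_lt_one (pair_bound hq hY hW)
  have nZW := one_sub_ne_zero_of_norm_lt_one (pair_bound hq hZ hW)
  have key2 : S * (1 - U*(Y*q)) = 1
      + ((U*(Z*q)) * (((1 - U*(Z*q)) * (1 - W*(Z*q)))⁻¹)
      + ((W*(Y*q)) * (((1 - Y*(W*q)) * (1 - Z*(W*q)))⁻¹)
      + (W*(Z*q)) * (1 - W*(Z*q))⁻¹)) := by
    linear_combination key
  have expand : S * ((1 - U*(Y*q)) * (1 - U*(Z*q)) * (1 - W*(Y*q)) * (1 - W*(Z*q)))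
      = (S * (1 - U*(Y*q))) * ((1 - U*(Z*q)) * ((1 - W*(Y*q)) * (1 - W*(Z*q)))) := by ring
  rw [expand, key2]
  have nWY : (1 - W*(Y*q)) ≠ 0 := one_sub_ne_zero_of_norm_lt_one (pair_bound hq hW hY)
  rw [show (1:ℂ) - Y*(W*q) = 1 - W*(Y*q) from by ring, show (1:ℂ) - Z*(W*q) = 1 - W*(Z*q) from by ring, mul_inv, mul_inv]
  have ha : (1 - U*(Z*q)) * (1 - U*(Z*q))⁻¹ = 1 := mul_inv_cancel₀ nUZ
  have hb : (1 - W*(Z*q)) * (1 - W*(Z*q))⁻¹ = 1 := mul_inv_cancel₀ nWZ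
  have hc : (1 - W*(Y*q)) * (1 - W*(Y*q))⁻¹ = 1 := mul_inv_cancel₀ nWY
  linear_combination (U*(Z*q))*(1 - W*(Y*q))*(1 - W*(Z*q))*(1 - W*(Z*q))⁻¹*ha
    + (U*(Z*q))*(1 - W*(Y*q))*hb
    + (W*(Y*q))*(1 - U*(Z*q))*(1 - W*(Z*q))*(1 - W*(Z*q))⁻¹*hc
    + (W*(Y*q))*(1 - U*(Z*q))*hb + (W*(Z*q))*(1 - U*(Z*q))*(1 - W*(Y*q))*hb
end

lemma natCast_mul_cpow (m n : ℕ) (w : ℂ) :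
    (((m*n : ℕ)) : ℂ) ^ w = ((m : ℂ))^w * ((n : ℂ))^w := by
  have := Complex.mul_cpow_ofReal_nonneg (Nat.cast_nonneg (α := ℝ) m) (Nat.cast_nonneg (α := ℝ) n) w
  push_cast at this ⊢
  exact this

lemma natCast_pow_cpow (p i : ℕ) (w : ℂ) : (((p^i : ℕ)) : ℂ)^w = ((p : ℂ)^w)^i := by
  induction i with
  | zero => simp
  | succ n ih => rw [pow_succ, natCast_mul_cpow, ih, pow_succ]

lemma natCast_prod_cpow {ι : Type*} (s : Finset ι) (f : ι → ℕ) (w : ℂ) :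
    ((∏ i ∈ s, f i : ℕ) : ℂ)^w = ∏ i ∈ s, ((f i : ℂ))^w := by
  classical
  induction s using Finset.induction with
  | empty => simp
  | insert _ _ h ih =>
    rw [Finset.prod_insert h, natCast_mul_cpow, ih, Finset.prod_insert h]

lemma sigmaC_prime_pow {p : ℕ} (hp : p.Prime) (A B : ℂ) (j : ℕ) :
    sigmaC A B (p^j) = geoS ((p:ℂ)^(-A)) ((p:ℂ)^(-B)) j := by
  rw [sigmaC, Nat.sum_divisors_prime_pow hp, geoS]
  refine Finset.sum_congr rfl fun i hi => ?_
  have hij : i ≤ j := by simp at hi; omega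
  rw [Nat.pow_div hij hp.pos, natCast_pow_cpow, natCast_pow_cpow]

set_option maxHeartbeats 2000000 in
lemma local_key (α β γ δ : ℂ)
    (hα : ‖α‖ < 1 / 4) (hβ : ‖β‖ < 1 / 4)
    (hγ : ‖γ‖ < 1 / 4) (hδ : ‖δ‖ < 1 / 4)
    (p : ℕ) (hp : p.Prime) (ν : ℕ) :
    ((p:ℂ)^β)^ν * ((∑ j ∈ Finset.range ν,
        (((p^j : ℕ)) : ℂ)^(-β-γ) * cP p (α+γ) (γ-δ) (α-β+γ-δ)) + (((p^ν : ℕ)) : ℂ)^(-β-γ))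
      = (∑' j : ℕ, sigmaC α (-δ) (p^j) * sigmaC γ (-β) (p^(j+ν)) * (p:ℂ)^(-(j:ℂ)))
        / (∑' j : ℕ, sigmaC α (-δ) (p^j) * sigmaC γ (-β) (p^j) * (p:ℂ)^(-(j:ℂ))) := by
  have hp2 : (2:ℝ) ≤ (p:ℝ) := by exact_mod_cast hp.two_le
  have hp0 : (0:ℝ) < (p:ℝ) := by linarith
  have hp1 : (1:ℝ) ≤ (p:ℝ) := by linarith
  have hpc0 : (p:ℂ) ≠ 0 := Nat.cast_ne_zero.mpr hp.pos.ne'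
  set M : ℝ := (p:ℝ) ^ ((1:ℝ)/4) with hM
  have reb : ∀ w : ℂ, ‖w‖ < 1/4 → w.re ≤ 1/4 := fun w hw =>
    le_of_lt (lt_of_le_of_lt (le_trans (le_abs_self _) (Complex.abs_re_le_norm w)) hw)
  have hnorm : ∀ w : ℂ, w.re ≤ 1/4 → ‖(p:ℂ)^w‖ ≤ M := by
    intro w hw
    rw [show ((p:ℕ):ℂ) = ((p:ℝ):ℂ) from by norm_cast,
      Complex.norm_cpow_eq_rpow_re_of_pos hp0]
    exact Real.rpow_le_rpow_of_exponent_le hp1 hw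
  have hU : ‖(p:ℂ)^(-α)‖ ≤ M := hnorm _ (reb _ (by rw [norm_neg]; exact hα))
  have hW : ‖(p:ℂ)^δ‖ ≤ M := hnorm _ (reb _ hδ)
  have hY : ‖(p:ℂ)^(-γ)‖ ≤ M := hnorm _ (reb _ (by rw [norm_neg]; exact hγ))
  have hZ : ‖(p:ℂ)^β‖ ≤ M := hnorm _ (reb _ hβ)
  have hq : M^2 * ‖(p:ℂ)⁻¹‖ < 1 := by
    rw [norm_inv, Complex.norm_natCast, hM]
    have he : ((p:ℝ)^((1:ℝ)/4))^2 * (p:ℝ)⁻¹ = (p:ℝ)^(-(1:ℝ)/2) := by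
      rw [← Real.rpow_natCast ((p:ℝ)^((1:ℝ)/4)) 2, ← Real.rpow_mul (le_of_lt hp0),
        ← Real.rpow_neg_one (p:ℝ), ← Real.rpow_add hp0]
      norm_num
    rw [he]
    exact Real.rpow_lt_one_of_one_lt_of_neg (by linarith) (by norm_num)
  have hpow : ∀ j : ℕ, (p:ℂ)^(-(j:ℂ)) = ((p:ℂ)⁻¹)^j := by
    intro j; rw [Complex.cpow_neg, Complex.cpow_natCast, inv_pow]
  have hnum : (∑' j : ℕ, sigmaC α (-δ) (p^j) * sigmaC γ (-β) (p^(j+ν)) * (p:ℂ)^(-(j:ℂ)))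
      = Sgen ((p:ℂ)^(-α)) ((p:ℂ)^δ) ((p:ℂ)^(-γ)) ((p:ℂ)^β) ((p:ℂ)⁻¹) ν := by
    rw [Sgen]
    exact tsum_congr fun j => by
      rw [sigmaC_prime_pow hp, sigmaC_prime_pow hp, hpow, neg_neg, neg_neg]
  have hden : (∑' j : ℕ, sigmaC α (-δ) (p^j) * sigmaC γ (-β) (p^j) * (p:ℂ)^(-(j:ℂ)))
      = Sgen ((p:ℂ)^(-α)) ((p:ℂ)^δ) ((p:ℂ)^(-γ)) ((p:ℂ)^β) ((p:ℂ)⁻¹) 0 := by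
    rw [Sgen]
    exact tsum_congr fun j => by
      rw [sigmaC_prime_pow hp, sigmaC_prime_pow hp, hpow, neg_neg, neg_neg, add_zero]
  have hS0D := Sgen_zero_mul hU hW hY hZ hq
  have hRne : (1:ℂ) - (p:ℂ)^(-α)*(p:ℂ)^δ*(p:ℂ)^(-γ)*(p:ℂ)^β*((p:ℂ)⁻¹)^2 ≠ 0 := by
    apply one_sub_ne_zero_of_norm_lt_one
    have hM0 : 0 ≤ M := le_trans (norm_nonneg _) hU
    have h1 : ‖(p:ℂ)^(-α)*(p:ℂ)^δ*(p:ℂ)^(-γ)*(p:ℂ)^β*((p:ℂ)⁻¹)^2‖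
        = ‖(p:ℂ)^(-α)‖*‖(p:ℂ)^δ‖*‖(p:ℂ)^(-γ)‖*‖(p:ℂ)^β‖*‖(p:ℂ)⁻¹‖^2 := by
      rw [norm_mul, norm_mul, norm_mul, norm_mul, norm_pow]
    rw [h1]
    have h2 : ‖(p:ℂ)^(-α)‖*‖(p:ℂ)^δ‖*‖(p:ℂ)^(-γ)‖*‖(p:ℂ)^β‖*‖(p:ℂ)⁻¹‖^2
        ≤ (M^2*‖(p:ℂ)⁻¹‖)^2 := by
      have q0 : (0:ℝ) ≤ ‖(p:ℂ)⁻¹‖ := norm_nonneg _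
      have := mul_le_mul (mul_le_mul (mul_le_mul hU hW (norm_nonneg _) hM0) hY
        (norm_nonneg _) (by positivity)) hZ (norm_nonneg _) (by positivity)
      nlinarith [norm_nonneg ((p:ℂ)^(-α)), norm_nonneg ((p:ℂ)^δ), norm_nonneg ((p:ℂ)^(-γ)),
        norm_nonneg ((p:ℂ)^β)]
    refine lt_of_le_of_lt h2 ?_
    have q0 : (0:ℝ) ≤ M^2*‖(p:ℂ)⁻¹‖ := by positivity
    nlinarith [hq]
  have hS0ne : Sgen ((p:ℂ)^(-α)) ((p:ℂ)^δ) ((p:ℂ)^(-γ)) ((p:ℂ)^β) ((p:ℂ)⁻¹) 0 ≠ 0 := by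
    intro h
    rw [h, zero_mul] at hS0D
    exact hRne hS0D.symm
  have hc : cP p (α+γ) (γ-δ) (α-β+γ-δ)
      = (1 - (p:ℂ)^(-α)*((p:ℂ)^(-γ)*(p:ℂ)⁻¹)) * (1 - (p:ℂ)^δ*((p:ℂ)^(-γ)*(p:ℂ)⁻¹))
        * (1 - (p:ℂ)^(-α)*(p:ℂ)^δ*(p:ℂ)^(-γ)*(p:ℂ)^β*((p:ℂ)⁻¹)^2)⁻¹ := by
    rw [cP]
    have e1 : (p:ℂ)^(-1-(α+γ)) = (p:ℂ)^(-α)*((p:ℂ)^(-γ)*(p:ℂ)⁻¹) := by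
      rw [show -1-(α+γ) = (-α) + ((-γ) + (-1)) by ring, Complex.cpow_add _ _ hpc0,
        Complex.cpow_add _ _ hpc0, Complex.cpow_neg_one]
    have e2 : (p:ℂ)^(-1-(γ-δ)) = (p:ℂ)^δ*((p:ℂ)^(-γ)*(p:ℂ)⁻¹) := by
      rw [show -1-(γ-δ) = δ + ((-γ) + (-1)) by ring, Complex.cpow_add _ _ hpc0,
        Complex.cpow_add _ _ hpc0, Complex.cpow_neg_one]
    have e3 : (p:ℂ)^(-2-(α-β+γ-δ))
        = (p:ℂ)^(-α)*(p:ℂ)^δ*(p:ℂ)^(-γ)*(p:ℂ)^β*((p:ℂ)⁻¹)^2 := by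
      rw [show -2-(α-β+γ-δ) = (-α) + (δ + ((-γ) + (β + ((-1) + (-1))))) by ring,
        Complex.cpow_add _ _ hpc0, Complex.cpow_add _ _ hpc0, Complex.cpow_add _ _ hpc0,
        Complex.cpow_add _ _ hpc0, Complex.cpow_add _ _ hpc0, Complex.cpow_neg_one]
      ring
    rw [e1, e2, e3]
  have hZne : (p:ℂ)^β ≠ 0 := by
    simp [Complex.cpow_eq_zero_iff, hpc0]
  have hbg : (p:ℂ)^(-β-γ) = ((p:ℂ)^β)⁻¹ * (p:ℂ)^(-γ) := by
    rw [show -β-γ = (-β)+(-γ) by ring, Complex.cpow_add _ _ hpc0, Complex.cpow_neg]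
  have h1 : (1 - (p:ℂ)^(-α)*((p:ℂ)^(-γ)*(p:ℂ)⁻¹)) * (1 - (p:ℂ)^δ*((p:ℂ)^(-γ)*(p:ℂ)⁻¹))
        * (1 - (p:ℂ)^(-α)*(p:ℂ)^δ*(p:ℂ)^(-γ)*(p:ℂ)^β*((p:ℂ)⁻¹)^2)⁻¹
        * Sgen ((p:ℂ)^(-α)) ((p:ℂ)^δ) ((p:ℂ)^(-γ)) ((p:ℂ)^β) ((p:ℂ)⁻¹) 0
        * ((1 - (p:ℂ)^(-α)*((p:ℂ)^β*(p:ℂ)⁻¹)) * (1 - (p:ℂ)^δ*((p:ℂ)^β*(p:ℂ)⁻¹))) = 1 := by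
    have expand : (1 - (p:ℂ)^(-α)*((p:ℂ)^(-γ)*(p:ℂ)⁻¹)) * (1 - (p:ℂ)^δ*((p:ℂ)^(-γ)*(p:ℂ)⁻¹))
        * (1 - (p:ℂ)^(-α)*(p:ℂ)^δ*(p:ℂ)^(-γ)*(p:ℂ)^β*((p:ℂ)⁻¹)^2)⁻¹
        * Sgen ((p:ℂ)^(-α)) ((p:ℂ)^δ) ((p:ℂ)^(-γ)) ((p:ℂ)^β) ((p:ℂ)⁻¹) 0
        * ((1 - (p:ℂ)^(-α)*((p:ℂ)^β*(p:ℂ)⁻¹)) * (1 - (p:ℂ)^δ*((p:ℂ)^β*(p:ℂ)⁻¹)))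
        = (1 - (p:ℂ)^(-α)*(p:ℂ)^δ*(p:ℂ)^(-γ)*(p:ℂ)^β*((p:ℂ)⁻¹)^2)⁻¹
          * (Sgen ((p:ℂ)^(-α)) ((p:ℂ)^δ) ((p:ℂ)^(-γ)) ((p:ℂ)^β) ((p:ℂ)⁻¹) 0
            * ((1 - (p:ℂ)^(-α)*((p:ℂ)^(-γ)*(p:ℂ)⁻¹)) * (1 - (p:ℂ)^(-α)*((p:ℂ)^β*(p:ℂ)⁻¹))
              * (1 - (p:ℂ)^δ*((p:ℂ)^(-γ)*(p:ℂ)⁻¹)) * (1 - (p:ℂ)^δ*((p:ℂ)^β*(p:ℂ)⁻¹)))) := by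
      ring
    rw [expand, hS0D, inv_mul_cancel₀ hRne]
  have hcS0 : (1 - (p:ℂ)^(-α)*((p:ℂ)^(-γ)*(p:ℂ)⁻¹)) * (1 - (p:ℂ)^δ*((p:ℂ)^(-γ)*(p:ℂ)⁻¹))
        * (1 - (p:ℂ)^(-α)*(p:ℂ)^δ*(p:ℂ)^(-γ)*(p:ℂ)^β*((p:ℂ)⁻¹)^2)⁻¹
        * Sgen ((p:ℂ)^(-α)) ((p:ℂ)^δ) ((p:ℂ)^(-γ)) ((p:ℂ)^β) ((p:ℂ)⁻¹) 0
      = ((1 - (p:ℂ)^(-α)*((p:ℂ)^β*(p:ℂ)⁻¹)) * (1 - (p:ℂ)^δ*((p:ℂ)^β*(p:ℂ)⁻¹)))⁻¹ :=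
    eq_inv_of_mul_eq_one_left h1
  rw [hnum, hden, eq_div_iff hS0ne, Sgen_formula hU hW hY hZ hq ν, hc]
  have step1 : ∑ j ∈ Finset.range ν, (((p^j : ℕ)) : ℂ)^(-β-γ)
        * ((1 - (p:ℂ)^(-α)*((p:ℂ)^(-γ)*(p:ℂ)⁻¹)) * (1 - (p:ℂ)^δ*((p:ℂ)^(-γ)*(p:ℂ)⁻¹))
          * (1 - (p:ℂ)^(-α)*(p:ℂ)^δ*(p:ℂ)^(-γ)*(p:ℂ)^β*((p:ℂ)⁻¹)^2)⁻¹)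
      = (∑ i ∈ Finset.range ν, ((p:ℂ)^(-γ))^i * (((p:ℂ)^β)⁻¹)^i)
        * ((1 - (p:ℂ)^(-α)*((p:ℂ)^(-γ)*(p:ℂ)⁻¹)) * (1 - (p:ℂ)^δ*((p:ℂ)^(-γ)*(p:ℂ)⁻¹))
          * (1 - (p:ℂ)^(-α)*(p:ℂ)^δ*(p:ℂ)^(-γ)*(p:ℂ)^β*((p:ℂ)⁻¹)^2)⁻¹) := by
    rw [Finset.sum_mul]
    refine Finset.sum_congr rfl fun j hj => ?_
    rw [natCast_pow_cpow, hbg, mul_pow]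
    ring
  have step2 : (((p^ν : ℕ)) : ℂ)^(-β-γ) = (((p:ℂ)^β)⁻¹)^ν * ((p:ℂ)^(-γ))^ν := by
    rw [natCast_pow_cpow, hbg, mul_pow]
  have step3 : ∑ i ∈ Finset.range ν, ((p:ℂ)^(-γ))^i * ((p:ℂ)^β)^(ν-i)
      = ((p:ℂ)^β)^ν * ∑ i ∈ Finset.range ν, ((p:ℂ)^(-γ))^i * (((p:ℂ)^β)⁻¹)^i := by
    rw [Finset.mul_sum]
    refine Finset.sum_congr rfl fun i hi => ?_
    have hiν : i ≤ ν := le_of_lt (Finset.mem_range.mp hi)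
    have hZine : ((p:ℂ)^β)^i ≠ 0 := pow_ne_zero _ hZne
    have h4' : ((p:ℂ)^β)^(ν-i) * ((p:ℂ)^β)^i = ((p:ℂ)^β)^ν := by
      rw [← pow_add, Nat.sub_add_cancel hiν]
    rw [inv_pow]
    calc ((p:ℂ)^(-γ))^i * ((p:ℂ)^β)^(ν-i)
        = ((p:ℂ)^(-γ))^i * (((p:ℂ)^β)^(ν-i) * ((p:ℂ)^β)^i * (((p:ℂ)^β)^i)⁻¹) := by
          rw [mul_assoc (((p:ℂ)^β)^(ν-i)), mul_inv_cancel₀ hZine, mul_one]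
      _ = ((p:ℂ)^(-γ))^i * (((p:ℂ)^β)^ν * (((p:ℂ)^β)^i)⁻¹) := by rw [h4']
      _ = ((p:ℂ)^β)^ν * (((p:ℂ)^(-γ))^i * (((p:ℂ)^β)^i)⁻¹) := by ring
  have hZZ : ((p:ℂ)^β)^ν * (((p:ℂ)^β)⁻¹)^ν = 1 := by
    rw [← mul_pow, mul_inv_cancel₀ hZne, one_pow]
  rw [step1, step2, step3]
  linear_combination ((((p:ℂ)^β)^ν * (∑ i ∈ Finset.range ν, ((p:ℂ)^(-γ))^i * (((p:ℂ)^β)⁻¹)^i))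
      * hcS0) + (((p:ℂ)^(-γ))^ν * Sgen ((p:ℂ)^(-α)) ((p:ℂ)^δ) ((p:ℂ)^(-γ)) ((p:ℂ)^β) ((p:ℂ)⁻¹) 0) * hZZ

noncomputable def etaH (e : ℂ) : ArithmeticFunction ℂ :=
  ⟨fun n => if n = 0 then 0 else (n:ℂ)^e, rfl⟩

noncomputable def etaG (c : ℕ → ℂ) : ArithmeticFunction ℂ :=
  ⟨fun n => if n = 0 then 0 else ∏ p ∈ n.primeFactors, c p, rfl⟩

@[simp] lemma etaH_apply (e : ℂ) (n : ℕ) :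
    etaH e n = if n = 0 then 0 else (n:ℂ)^e := rfl

@[simp] lemma etaG_apply (c : ℕ → ℂ) (n : ℕ) :
    etaG c n = if n = 0 then 0 else ∏ p ∈ n.primeFactors, c p := rfl

lemma etaH_mult (e : ℂ) : (etaH e).IsMultiplicative := by
  rw [ArithmeticFunction.IsMultiplicative.iff_ne_zero]
  constructor
  · simp
  · intro m n hm hn _
    simp only [etaH_apply, if_neg hm, if_neg hn, if_neg (mul_ne_zero hm hn)]
    exact_mod_cast natCast_mul_cpow m n e

lemma etaG_mult (c : ℕ → ℂ) : (etaG c).IsMultiplicative := by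
  rw [ArithmeticFunction.IsMultiplicative.iff_ne_zero]
  constructor
  · simp
  · intro m n hm hn hmn
    simp only [etaG_apply, if_neg hm, if_neg hn, if_neg (mul_ne_zero hm hn)]
    rw [Nat.Coprime.primeFactors_mul hmn,
      Finset.prod_union (Nat.Coprime.disjoint_primeFactors hmn)]

lemma etaFun_factor (e : ℂ) (c : ℕ → ℂ) {a : ℕ} (ha : a ≠ 0) :
    (∑ l ∈ a.divisors, (l:ℂ)^e * ∏ p ∈ (a/l).primeFactors, c p)
      = ∏ p ∈ a.primeFactors,
          ((∑ j ∈ Finset.range (a.factorization p), (((p^j : ℕ)) : ℂ)^e * c p)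
            + (((p^(a.factorization p) : ℕ)) : ℂ)^e) := by
  classical
  have key : (etaH e * etaG c) a
      = ∑ l ∈ a.divisors, (l:ℂ)^e * ∏ p ∈ (a/l).primeFactors, c p := by
    rw [ArithmeticFunction.mul_apply,
      Nat.sum_divisorsAntidiagonal (f := fun x y => etaH e x * etaG c y)]
    refine Finset.sum_congr rfl fun l hl => ?_
    have hl0 : l ≠ 0 := (Nat.pos_of_mem_divisors hl).ne'
    have hnl0 : a / l ≠ 0 := by
      have hld := Nat.dvd_of_mem_divisors hl
      exact (Nat.div_pos (Nat.le_of_dvd (Nat.pos_of_ne_zero ha) hld)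
        (Nat.pos_of_mem_divisors hl)).ne'
    simp [hl0, hnl0]
  rw [← key, ((etaH_mult e).mul (etaG_mult c)).multiplicative_factorization _ ha,
    Nat.prod_factorization_eq_prod_primeFactors]
  refine Finset.prod_congr rfl fun p hp => ?_
  have hpp : p.Prime := Nat.prime_of_mem_primeFactors hp
  rw [ArithmeticFunction.mul_apply,
    Nat.sum_divisorsAntidiagonal (f := fun x y => etaH e x * etaG c y),
    Nat.sum_divisors_prime_pow hpp, Finset.sum_range_succ]
  congr 1
  · refine Finset.sum_congr rfl fun j hj => ?_
    have hjν : j < a.factorization p := Finset.mem_range.mp hj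
    have hpj : (p:ℕ)^j ≠ 0 := pow_ne_zero _ hpp.pos.ne'
    rw [Nat.pow_div (le_of_lt hjν) hpp.pos]
    have hfac : ((p:ℕ)^(a.factorization p - j)).primeFactors = {p} :=
      Nat.primeFactors_prime_pow (by omega) hpp
    simp [hpj, pow_ne_zero _ hpp.pos.ne', hfac, hpp.ne_zero]
  · rw [Nat.div_self (pow_pos hpp.pos _)]
    simp [pow_ne_zero _ hpp.pos.ne', hpp.ne_zero]

lemma natCast_cpow_factorization {a : ℕ} (ha : a ≠ 0) (w : ℂ) :
    (a:ℂ)^w = ∏ p ∈ a.primeFactors, ((p:ℂ)^w)^(a.factorization p) := by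
  conv_lhs => rw [← Nat.factorization_prod_pow_eq_self ha]
  rw [Nat.prod_factorization_eq_prod_primeFactors, natCast_prod_cpow]
  exact Finset.prod_congr rfl fun p _ => natCast_pow_cpow p _ w


/-- for coprime positive integers `a, b`,
`a^β b^δ η_{α,β,γ,δ,a,b}(0,0,β+δ) = B_{α,−δ,γ,−β,a} B_{γ,−β,α,−δ,b}`.
The smallness hypothesis on the shifts guarantees that both sides are defined
(all the series converge and no division by zero occurs). -/
theorem stmt_4 (α β γ δ : ℂ)
    (hα : ‖α‖ < 1 / 4) (hβ : ‖β‖ < 1 / 4)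
    (hγ : ‖γ‖ < 1 / 4) (hδ : ‖δ‖ < 1 / 4)
    (a b : ℕ) (ha : 0 < a) (hb : 0 < b) (hab : Nat.gcd a b = 1) :
    (a : ℂ) ^ β * (b : ℂ) ^ δ * etaAB α β γ δ a b 0 0 (β + δ)
      = Bfactor α (-δ) γ (-β) a * Bfactor γ (-β) α (-δ) b := by
  have hane : a ≠ 0 := ha.ne'
  have hbne : b ≠ 0 := hb.ne'
  have ea : etaA α β γ δ a 0 0 (β+δ)
      = ∑ l ∈ a.divisors, (l:ℂ)^(-β-γ) * ∏ p ∈ (a/l).primeFactors,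
          cP p (α+γ) (γ-δ) (α-β+γ-δ) := by
    rw [etaA, show -γ + δ - 2*(0:ℂ) - (β+δ) = -β-γ by ring,
      show α - β + γ - δ + 2*(0:ℂ) + 2*(0:ℂ) + (β+δ) = α+γ by ring,
      show γ - δ + 2*(0:ℂ) = γ-δ by ring,
      show α - β + γ - δ + 2*(0:ℂ) + 2*(0:ℂ) = α-β+γ-δ by ring]
  have eb : etaA γ δ α β b 0 0 (β+δ)
      = ∑ l ∈ b.divisors, (l:ℂ)^(-δ-α) * ∏ p ∈ (b/l).primeFactors,
          cP p (γ+α) (α-β) (γ-δ+α-β) := by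
    rw [etaA, show -α + β - 2*(0:ℂ) - (β+δ) = -δ-α by ring,
      show γ - δ + α - β + 2*(0:ℂ) + 2*(0:ℂ) + (β+δ) = γ+α by ring,
      show α - β + 2*(0:ℂ) = α-β by ring,
      show γ - δ + α - β + 2*(0:ℂ) + 2*(0:ℂ) = γ-δ+α-β by ring]
  rw [etaAB, ea, eb, etaFun_factor _ _ hane, etaFun_factor _ _ hbne,
    natCast_cpow_factorization hane β, natCast_cpow_factorization hbne δ,
    Bfactor, Bfactor, mul_mul_mul_comm, ← Finset.prod_mul_distrib,
    ← Finset.prod_mul_distrib]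
  congr 1
  · exact Finset.prod_congr rfl fun p hp =>
      local_key α β γ δ hα hβ hγ hδ p (Nat.prime_of_mem_primeFactors hp) _
  · exact Finset.prod_congr rfl fun p hp =>
      local_key γ δ α β hγ hδ hα hβ p (Nat.prime_of_mem_primeFactors hp) _
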